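/- Under these hypotheses, AᵢBᵢψ = AⱼBⱼψ = −BᵢAᵢψ for all i, j ∈ {1,…,n}; in particular (AᵢBᵢ + BᵢAᵢ)ψ = 0 for every i ∈ {1,…,n}. -/

import Mathlib

/-- The product `Π_{i ∈ S} T i` of the operators `T i`, `i ∈ S`, multiplied in
increasing order of the index; all products used below are over pairwise commuting
operators, so the order of the factors is irrelevant. -/
noncomputable def prodOver {H : Type*} [NormedAddCommGroup H] [InnerProductSpace ℂ H]
    {n : ℕ} (T : Fin n → H →L[ℂ] H) (S : Finset (Fin n)) : H →L[ℂ] H :=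
  ((S.sort (· ≤ ·)).map T).prod

lemma prodOver_empty {H : Type*} [NormedAddCommGroup H] [InnerProductSpace ℂ H]
    {n : ℕ} (T : Fin n → H →L[ℂ] H) : prodOver T ∅ = 1 := by
  simp [prodOver]

lemma prodOver_insert {H : Type*} [NormedAddCommGroup H] [InnerProductSpace ℂ H]
    {n : ℕ} (T : Fin n → H →L[ℂ] H)
    (hT : ∀ i j, i ≠ j → ∀ x, T i (T j x) = T j (T i x))
    (a : Fin n) (S : Finset (Fin n)) (ha : a ∉ S) :
    prodOver T (insert a S) = T a * prodOver T S := by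
  unfold prodOver
  have hperm : List.Perm ((insert a S).sort (· ≤ ·)) (a :: S.sort (· ≤ ·)) := by
    rw [← Multiset.coe_eq_coe]
    rw [Finset.sort_eq, ← Multiset.cons_coe, Finset.sort_eq]
    exact Finset.insert_val_of_notMem ha
  have hpw : (((insert a S).sort (· ≤ ·)).map T).Pairwise Commute := by
    refine List.Pairwise.map T (fun x y hxy => ?_) ((insert a S).sort_nodup (· ≤ ·))
    ext z
    simpa [ContinuousLinearMap.mul_apply] using hT x y hxy z
  calc (((insert a S).sort (· ≤ ·)).map T).prod
      = ((a :: S.sort (· ≤ ·)).map T).prod := (hperm.map T).prod_eq' hpw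
    _ = T a * ((S.sort (· ≤ ·)).map T).prod := by simp

lemma prodOver_erase {H : Type*} [NormedAddCommGroup H] [InnerProductSpace ℂ H]
    {n : ℕ} (T : Fin n → H →L[ℂ] H)
    (hT : ∀ i j, i ≠ j → ∀ x, T i (T j x) = T j (T i x))
    (a : Fin n) (S : Finset (Fin n)) (ha : a ∈ S) :
    prodOver T S = T a * prodOver T (S.erase a) := by
  conv_lhs => rw [← Finset.insert_erase ha]
  exact prodOver_insert T hT a _ (Finset.notMem_erase a S)

/-- in a complex Hilbert space `H`, fix `n ≥ 3`, a unit vector `ψ`,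
and observables `A₁,…,Aₙ,B₁,…,Bₙ` (self-adjoint involutive continuous linear
operators) satisfying the compatibility relations, together with the
maximal-violation relations of `Iₙ`: `Aᵢ (Π_{j≠i} Bⱼ) ψ = ψ` for every `i`, and
`Aᵢ Aⱼ A_k (Π_{m∉{i,j,k}} B_m) ψ = −ψ` for every triple `i < j < k` (expressed via
three-element subsets `S`).  Then `AᵢBᵢψ = AⱼBⱼψ = −BᵢAᵢψ` for all `i, j`; in
particular `(AᵢBᵢ + BᵢAᵢ)ψ = 0` for every `i`. -/
theorem stmt9 {H : Type*} [NormedAddCommGroup H] [InnerProductSpace ℂ H]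
    (n : ℕ) (hn : 3 ≤ n)
    (A B : Fin n → H →L[ℂ] H)
    (hAsa : ∀ i (x y : H), (inner ℂ (A i x) y : ℂ) = inner ℂ x (A i y))
    (hBsa : ∀ i (x y : H), (inner ℂ (B i x) y : ℂ) = inner ℂ x (B i y))
    (hAinv : ∀ i (x : H), A i (A i x) = x)
    (hBinv : ∀ i (x : H), B i (B i x) = x)
    (hAA : ∀ i j, i ≠ j → ∀ x : H, A i (A j x) = A j (A i x))
    (hAB : ∀ i j, i ≠ j → ∀ x : H, A i (B j x) = B j (A i x))
    (hBB : ∀ i j, i ≠ j → ∀ x : H, B i (B j x) = B j (B i x))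
    (ψ : H) (hψ : ‖ψ‖ = 1)
    (hplus : ∀ i, A i (prodOver B (Finset.univ.erase i) ψ) = ψ)
    (hminus : ∀ S : Finset (Fin n), S.card = 3 →
      prodOver A S (prodOver B Sᶜ ψ) = -ψ) :
    (∀ i j, A i (B i ψ) = A j (B j ψ)) ∧
    (∀ i, A i (B i ψ) = -(B i (A i ψ))) ∧
    (∀ i, A i (B i ψ) + B i (A i ψ) = 0) := by
  set φ := prodOver B Finset.univ ψ with hφdef
  -- C_i φ = ψ
  have hC : ∀ i, A i (B i φ) = ψ := by
    intro i
    have h1 : φ = B i (prodOver B (Finset.univ.erase i) ψ) := by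
      rw [hφdef, prodOver_erase B hBB i Finset.univ (Finset.mem_univ i)]
      rfl
    rw [h1, hBinv, hplus i]
  -- triples
  have hTriple : ∀ i j k, i ≠ j → i ≠ k → j ≠ k →
      A i (B i (A j (B j (A k (B k φ))))) = -ψ := by
    intro i j k hij hik hjk
    have hS : ({i, j, k} : Finset (Fin n)).card = 3 := by
      rw [Finset.card_insert_of_notMem (by simp [hij, hik]),
        Finset.card_insert_of_notMem (by simp [hjk]), Finset.card_singleton]
    have hm := hminus {i, j, k} hS
    have hcompl : ({i, j, k} : Finset (Fin n))ᶜ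
        = ((Finset.univ.erase i).erase j).erase k := by
      ext x; simp [Finset.mem_compl]; tauto
    rw [hcompl,
      prodOver_insert A hAA i {j, k} (by simp [hij, hik]),
      show ({j, k} : Finset (Fin n)) = insert j {k} from rfl,
      prodOver_insert A hAA j {k} (by simp [hjk]),
      show ({k} : Finset (Fin n)) = insert k ∅ from rfl,
      prodOver_insert A hAA k ∅ (by simp),
      prodOver_empty] at hm
    simp only [ContinuousLinearMap.mul_apply, ContinuousLinearMap.one_apply] at hm
    have hφ : φ = B i (B j (B k (prodOver B
        (((Finset.univ.erase i).erase j).erase k) ψ))) := by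
      rw [hφdef,
        prodOver_erase B hBB i Finset.univ (Finset.mem_univ i),
        prodOver_erase B hBB j _ (by simp [Ne.symm hij]),
        prodOver_erase B hBB k _ (by simp [Ne.symm hik, Ne.symm hjk])]
      simp [ContinuousLinearMap.mul_apply]
    have hB : prodOver B (((Finset.univ.erase i).erase j).erase k) ψ
        = B k (B j (B i φ)) := by
      rw [hφ, hBinv, hBinv, hBinv]
    rw [hB] at hm
    rw [hBB j i (Ne.symm hij), hBB k i (Ne.symm hik), hBB k j (Ne.symm hjk),
      hAB k i (Ne.symm hik), hAB k j (Ne.symm hjk), hAB j i (Ne.symm hij)] at hm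
    exact hm
  -- pick a third index
  have hthird : ∀ i j : Fin n, ∃ k, k ≠ i ∧ k ≠ j := by
    intro i j
    have hne : (({i, j} : Finset (Fin n))ᶜ).Nonempty := by
      rw [← Finset.card_pos, Finset.card_compl]
      have h2 : ({i, j} : Finset (Fin n)).card ≤ 2 :=
        (Finset.card_insert_le _ _).trans (by simp)
      have h3 : Fintype.card (Fin n) = n := Fintype.card_fin n
      omega
    obtain ⟨k, hk⟩ := hne
    simp [Finset.mem_compl] at hk
    exact ⟨k, hk.1, hk.2⟩
  have key : ∀ i j, i ≠ j → A i (B i (A j (B j ψ))) = -ψ := by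
    intro i j hij
    obtain ⟨k, hki, hkj⟩ := hthird i j
    have h := hTriple i j k hij (Ne.symm hki) (Ne.symm hkj)
    rw [hC k] at h
    exact h
  have key2 : ∀ i j, i ≠ j → A j (B j ψ) = -(B i (A i ψ)) := by
    intro i j hij
    have h2 := congrArg (A i) (key i j hij)
    rw [hAinv, map_neg] at h2
    have h3 := congrArg (B i) h2
    rw [hBinv, map_neg] at h3
    exact h3
  have eq_all : ∀ i j, A i (B i ψ) = A j (B j ψ) := by
    intro i j
    by_cases h : i = j
    · rw [h]
    · obtain ⟨k, hki, hkj⟩ := hthird i j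
      rw [key2 k i hki, key2 k j hkj]
  have second : ∀ i, A i (B i ψ) = -(B i (A i ψ)) := by
    intro i
    obtain ⟨j, hji, -⟩ := hthird i i
    rw [eq_all i j, key2 i j (Ne.symm hji)]
  refine ⟨eq_all, second, fun i => ?_⟩
  rw [second i]
  simp
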